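/- Let f be a homeomorphism of a compact metric space M, Λ a compact f-invariant set, and suppose there is ε > 0 and a continuous map assigning to each x ∈ Λ a 'stable' neighborhood with the property that the open set U = ∪_{x∈Λ} B(x, ε) satisfies: for all y ∈ U, dist(fⁿ(y), fⁿ(π(y))) → 0 uniformly for some π(y) ∈ Λ (uniform contraction toward Λ). Then there exists N ≥ 1 with f^N(closure U) ⊆ U; in particular, if U ≠ M, then f is not chain-recurrent. -/

import Mathlib

/-- If the `ε`-neighborhood `U` of a compact invariant set `Λ` is uniformly
contracted toward `Λ` under iteration, then some iterate of `f` sends the closure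
of `U` inside `U`; in particular, if `U ≠ M` then `f` has a nonempty proper open
trapping region, i.e. `f` is not chain-recurrent. -/
theorem stmt_17 {M : Type*} [MetricSpace M] [CompactSpace M] (f : M ≃ₜ M)
    (Λ : Set M) (hΛc : IsCompact Λ) (hΛne : Λ.Nonempty) (hΛinv : f '' Λ = Λ)
    (ε : ℝ) (hε : 0 < ε) (π : M → M)
    (hπ : ∀ y ∈ {y : M | ∃ x ∈ Λ, dist y x < ε}, π y ∈ Λ)
    (hcontr : ∀ δ : ℝ, 0 < δ → ∃ N : ℕ, ∀ n ≥ N,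
      ∀ y ∈ {y : M | ∃ x ∈ Λ, dist y x < ε},
        dist ((⇑f)^[n] y) ((⇑f)^[n] (π y)) < δ) :
    (∃ N : ℕ, 1 ≤ N ∧
      (⇑f)^[N] '' closure {y : M | ∃ x ∈ Λ, dist y x < ε} ⊆
        {y : M | ∃ x ∈ Λ, dist y x < ε}) ∧
    ({y : M | ∃ x ∈ Λ, dist y x < ε} ≠ Set.univ →
      ∃ V : Set M, IsOpen V ∧ V.Nonempty ∧ V ≠ Set.univ ∧ f '' closure V ⊆ V) := by
  set U : Set M := {y : M | ∃ x ∈ Λ, dist y x < ε} with hUdef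
  -- points with small infDist to Λ are in U
  have hUsub : ∀ y : M, Metric.infDist y Λ < ε → y ∈ U := by
    intro y hy
    obtain ⟨x, hx, hxd⟩ := hΛc.exists_infDist_eq_dist hΛne y
    exact ⟨x, hx, by rw [← hxd]; exact hy⟩
  -- Λ is invariant under all iterates
  have hΛit : ∀ n : ℕ, (⇑f)^[n] '' Λ = Λ := by
    intro n
    induction n with
    | zero => simp
    | succ n ih => rw [Function.iterate_succ', Set.image_comp, ih, hΛinv]
  obtain ⟨N₀, hN₀⟩ := hcontr (ε / 4) (by linarith)
  -- the key contraction fact for the closure of U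
  have hkey : ∀ n ≥ N₀, (⇑f)^[n] '' closure U ⊆ {y : M | Metric.infDist y Λ ≤ ε / 4} := by
    intro n hn
    have hcl : IsClosed {y : M | Metric.infDist y Λ ≤ ε / 4} :=
      isClosed_le (Metric.continuous_infDist_pt Λ) continuous_const
    have hsub : (⇑f)^[n] '' U ⊆ {y : M | Metric.infDist y Λ ≤ ε / 4} := by
      rintro _ ⟨y, hy, rfl⟩
      have h1 := hN₀ n hn y hy
      have h2 : (⇑f)^[n] (π y) ∈ Λ := by
        rw [← hΛit n]; exact ⟨π y, hπ y hy, rfl⟩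
      exact le_trans (Metric.infDist_le_dist_of_mem h2) (le_of_lt h1)
    calc (⇑f)^[n] '' closure U ⊆ closure ((⇑f)^[n] '' U) :=
          image_closure_subset_closure_image (f.continuous.iterate n)
      _ ⊆ _ := closure_minimal hsub hcl
  set L : ℕ := max N₀ 1 with hLdef
  have hL1 : 1 ≤ L := le_max_right _ _
  have hLN₀ : N₀ ≤ L := le_max_left _ _
  constructor
  · -- part 1
    refine ⟨L, hL1, ?_⟩
    intro y hy
    have := hkey L hLN₀ hy
    exact hUsub y (by simp only [Set.mem_setOf_eq] at this ⊢; linarith)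
  · -- part 2
    intro hUne
    -- the increasing radii ε/2 ≤ g m < ε
    set g : ℕ → ℝ := fun m => ε - ε / 2 ^ (m + 1) with hgdef
    have hglt : ∀ m, g m < ε := by
      intro m
      have : (0:ℝ) < ε / 2 ^ (m + 1) := by positivity
      simp only [hgdef]; linarith
    have hgmono : ∀ m, g m < g (m + 1) := by
      intro m
      have h1 : (2:ℝ) ^ (m + 1) < 2 ^ (m + 1 + 1) := by
        apply pow_lt_pow_right₀ one_lt_two
        omega
      have h : ε / 2 ^ (m + 1 + 1) < ε / 2 ^ (m + 1) :=
        div_lt_div_of_pos_left hε (by positivity) h1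
      simp only [hgdef]
      linarith
    have hg0 : g 0 = ε / 2 := by simp [hgdef]; ring
    set Vm : ℕ → Set M := fun m => {y : M | Metric.infDist y Λ < g m} with hVmdef
    set V : Set M := ⋃ m ∈ Finset.range L, (⇑f)^[m] '' Vm m with hVdef
    have hOpenMap : ∀ m : ℕ, IsOpenMap (⇑f)^[m] := by
      intro m
      induction m with
      | zero => simpa using IsOpenMap.id
      | succ m ih =>
        rw [Function.iterate_succ']
        exact f.isOpenMap.comp ih
    have hVopen : IsOpen V := by
      apply isOpen_biUnion
      intro m _
      exact hOpenMap m _ (isOpen_lt (Metric.continuous_infDist_pt Λ) continuous_const)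
    -- membership helper
    have hmemV : ∀ m : ℕ, m < L → ∀ w : M, Metric.infDist w Λ < g m → (⇑f)^[m] w ∈ V := by
      intro m hm w hw
      exact Set.mem_biUnion (Finset.mem_range.2 hm) ⟨w, hw, rfl⟩
    have hVne : V.Nonempty := by
      obtain ⟨x, hx⟩ := hΛne
      refine ⟨x, ?_⟩
      have : (⇑f)^[0] x ∈ V := by
        apply hmemV 0 (by omega) x
        rw [Metric.infDist_zero_of_mem hx, hg0]; linarith
      simpa using this
    -- V ≠ univ
    have hVproper : V ≠ Set.univ := by
      intro hVu
      obtain ⟨p, hp⟩ := (Set.ne_univ_iff_exists_notMem U).1 hUne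
      have hz : (⇑f.symm)^[L] p ∈ V := hVu ▸ Set.mem_univ _
      rw [hVdef] at hz
      obtain ⟨m, hm, w, hw, hwz⟩ := by
        simpa only [Set.mem_iUnion, Finset.mem_range, exists_prop] using hz
      have hwU : w ∈ closure U := subset_closure (hUsub w (lt_trans hw (hglt m)))
      have hpw : p = (⇑f)^[L + m] w := by
        have h1 : (⇑f)^[L] ((⇑f.symm)^[L] p) = p :=
          (Function.LeftInverse.iterate f.apply_symm_apply L) p
        rw [← h1, ← hwz, ← Function.iterate_add_apply]
      have : p ∈ {y : M | Metric.infDist y Λ ≤ ε / 4} :=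
        hkey (L + m) (le_trans hLN₀ (Nat.le_add_right _ _)) ⟨w, hwU, hpw.symm ▸ rfl⟩
      exact hp (hUsub p (by simp only [Set.mem_setOf_eq] at this; linarith))
    -- trapping: f '' closure V ⊆ V
    have htrap : f '' closure V ⊆ V := by
      -- closed superset W of V
      set W : Set M := ⋃ m ∈ Finset.range L, (⇑f)^[m] '' {y : M | Metric.infDist y Λ ≤ g m}
        with hWdef
      have hWclosed : IsClosed W := by
        apply Set.Finite.isClosed_biUnion (Finset.range L).finite_toSet
        intro m _
        have hc : IsCompact {y : M | Metric.infDist y Λ ≤ g m} :=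
          (isClosed_le (Metric.continuous_infDist_pt Λ) continuous_const).isCompact
        exact (hc.image (f.continuous.iterate m)).isClosed
      have hVW : V ⊆ W := by
        apply Set.iUnion₂_mono
        intro m _
        refine Set.image_mono ?_
        intro y hy
        simp only [hVmdef, Set.mem_setOf_eq] at hy ⊢
        exact le_of_lt hy
      have hclVW : closure V ⊆ W := closure_minimal hVW hWclosed
      rintro _ ⟨z, hz, rfl⟩
      have hzW := hclVW hz
      rw [hWdef] at hzW
      obtain ⟨m, hm, w, hw, hwz⟩ := by
        simpa only [Set.mem_iUnion, Finset.mem_range, exists_prop] using hzW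
      have hfz : f z = (⇑f)^[m + 1] w := by
        rw [← hwz, Function.iterate_succ_apply']
      rcases lt_or_eq_of_le (Nat.succ_le_of_lt hm) with hlt | heq
      · -- m + 1 < L
        rw [hfz]
        exact hmemV (m + 1) hlt w (lt_of_le_of_lt hw (hgmono m))
      · -- m + 1 = L
        have hwU : w ∈ closure U := subset_closure (hUsub w (lt_of_le_of_lt hw (hglt m)))
        have hmem : f z ∈ {y : M | Metric.infDist y Λ ≤ ε / 4} := by
          apply hkey L hLN₀
          refine ⟨w, hwU, ?_⟩
          rw [hfz]
          exact congrArg (fun n => (⇑f)^[n] w) heq.symm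
        have : (⇑f)^[0] (f z) ∈ V := by
          apply hmemV 0 (by omega) (f z)
          simp only [Set.mem_setOf_eq] at hmem
          rw [hg0]; linarith
        simpa using this
    exact ⟨V, hVopen, hVne, hVproper, htrap⟩
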